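/- For a Lie group with left-invariant metric making a frame {X_a} orthonormal with structure constants [X_a,X_b] = Σ_c C_{ab}^c X_c, the divergence of each frame field is constant and equals f_a = −Σ_b C_{ab}^b; consequently the geometric potential reduces to the algebraic constant V = ¼Σ_a f_a² = ¼Σ_a (Σ_b C_{ab}^b)² ≥ 0, and V = 0 iff the Lie algebra is unimodular. -/

import Mathlib

open MeasureTheory Matrix

/-- The determinant (in the rows), as a continuous multilinear map. -/
noncomputable def detCM (n : ℕ) : ContinuousMultilinearMap ℝ (fun _ : Fin n => (Fin n → ℝ)) ℝ :=
  MultilinearMap.mkContinuous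
    (Matrix.detRowAlternating (R := ℝ) (n := Fin n)).toMultilinearMap
    (Nat.factorial n) (by
      intro m
      have h1 : (Matrix.detRowAlternating (R := ℝ) (n := Fin n)).toMultilinearMap m
          = Matrix.det (Matrix.of m) := rfl
      rw [h1, Matrix.det_apply]
      calc ‖∑ σ : Equiv.Perm (Fin n), Equiv.Perm.sign σ • ∏ i, Matrix.of m (σ i) i‖
          ≤ ∑ σ : Equiv.Perm (Fin n), ‖Equiv.Perm.sign σ • ∏ i, Matrix.of m (σ i) i‖ :=
            norm_sum_le _ _
        _ ≤ ∑ _σ : Equiv.Perm (Fin n), ∏ i, ‖m i‖ := by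
            apply Finset.sum_le_sum
            intro σ _
            have hs : ‖Equiv.Perm.sign σ • ∏ i, Matrix.of m (σ i) i‖
                = ‖∏ i, Matrix.of m (σ i) i‖ := by
              rcases Int.units_eq_one_or (Equiv.Perm.sign σ) with h | h <;> simp [h]
            rw [hs]
            calc ‖∏ i, Matrix.of m (σ i) i‖ = ∏ i, ‖m (σ i) i‖ := by
                  rw [norm_prod]; rfl
              _ ≤ ∏ i, ‖m (σ i)‖ := by
                  apply Finset.prod_le_prod (fun i _ => norm_nonneg _)
                  intro i _
                  exact norm_le_pi_norm (m (σ i)) i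
              _ = ∏ i, ‖m i‖ := Equiv.prod_comp σ (fun i => ‖m i‖)
        _ = (Nat.factorial n : ℝ) * ∏ i, ‖m i‖ := by
            rw [Finset.sum_const, Finset.card_univ, Fintype.card_perm, Fintype.card_fin,
              nsmul_eq_mul])

lemma detCM_apply (n : ℕ) (m : Fin n → (Fin n → ℝ)) :
    detCM n m = Matrix.det (Matrix.of m) := rfl

/-- **Divergence of a left-invariant orthonormal frame**: for a frame `{X_a}`
(modelled in a chart) that is pointwise a basis, closed under Lie bracket with
constant structure constants `[X_a,X_b] = Σ_c C_{ab}^c X_c`, the divergence of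
each frame field with respect to the Riemannian volume density making the
frame orthonormal is the constant `f_a = −Σ_b C_{ab}^b`; consequently the
geometric potential is the algebraic constant `V = ¼ Σ_a f_a² ≥ 0`, and
`V = 0` iff the Lie algebra is unimodular (`Σ_b C_{ab}^b = 0` for all `a`). -/
theorem left_invariant_frame_divergence
    (n : ℕ)
    (X : Fin n → EuclideanSpace ℝ (Fin n) → EuclideanSpace ℝ (Fin n))
    (hXsm : ∀ a, ContDiff ℝ 1 (X a))
    (C : Fin n → Fin n → Fin n → ℝ)
    (hbracket : ∀ a b x,
      fderiv ℝ (X b) x (X a x) - fderiv ℝ (X a) x (X b x)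
        = ∑ c : Fin n, C a b c • X c x)
    (M : EuclideanSpace ℝ (Fin n) → Matrix (Fin n) (Fin n) ℝ)
    (hM : ∀ x i a, M x i a = X a x i)
    (hdet : ∀ x, (M x).det ≠ 0)
    (ω : EuclideanSpace ℝ (Fin n) → ℝ)
    (hω : ∀ x, ω x = |(M x).det|⁻¹)
    (divh : (EuclideanSpace ℝ (Fin n) → EuclideanSpace ℝ (Fin n)) →
        EuclideanSpace ℝ (Fin n) → ℝ)
    (hdivh : ∀ F x, divh F x =
        (∑ b : Fin n, (fderiv ℝ F x (EuclideanSpace.single b 1)) b)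
        + fderiv ℝ (fun y => Real.log (ω y)) x (F x))
    (V : ℝ)
    (hV : V = (1 / 4) * ∑ a : Fin n, (∑ b : Fin n, C a b b) ^ 2) :
    (∀ a x, divh (X a) x = -∑ b : Fin n, C a b b) ∧
    0 ≤ V ∧
    (V = 0 ↔ ∀ a : Fin n, (∑ b : Fin n, C a b b) = 0) := by
  classical
  refine ⟨?_, ?_, ?_⟩
  · intro a x
    have hdX : ∀ b, DifferentiableAt ℝ (X b) x :=
      fun b => ((hXsm b).differentiable one_ne_zero).differentiableAt
    set L : Fin n → (EuclideanSpace ℝ (Fin n) →L[ℝ] EuclideanSpace ℝ (Fin n)) :=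
      fun b => fderiv ℝ (X b) x with hLdef
    set e : EuclideanSpace ℝ (Fin n) ≃L[ℝ] (Fin n → ℝ) :=
      PiLp.continuousLinearEquiv 2 ℝ (fun _ : Fin n => ℝ) with hedef
    set g : Fin n → EuclideanSpace ℝ (Fin n) → (Fin n → ℝ) :=
      fun i y j => X i y j with hgdef
    set v₀ : Fin n → (Fin n → ℝ) := fun j => g j x with hv₀def
    set A : Matrix (Fin n) (Fin n) ℝ :=
      Matrix.of (fun i j => (L a (EuclideanSpace.single j (1:ℝ))) i) with hAdef
    -- derivative of each coordinate family
    have hg : ∀ i : Fin n, HasFDerivAt (g i)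
        ((e : EuclideanSpace ℝ (Fin n) →L[ℝ] (Fin n → ℝ)).comp (L i)) x := by
      intro i
      exact ((e : EuclideanSpace ℝ (Fin n) →L[ℝ] (Fin n → ℝ)).hasFDerivAt).comp x
        (hdX i).hasFDerivAt
    have hΦ := HasFDerivAt.multilinear_comp (f := detCM n) hg
    set G : EuclideanSpace ℝ (Fin n) →L[ℝ] ℝ :=
      ∑ i : Fin n, ((detCM n).toContinuousLinearMap (fun j => g j x) i).comp
        ((e : EuclideanSpace ℝ (Fin n) →L[ℝ] (Fin n → ℝ)).comp (L i)) with hGdef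
    have hfun : (fun y => detCM n (fun i => g i y)) = fun y => (M y).det := by
      funext y
      rw [detCM_apply]
      rw [show Matrix.of (fun i => g i y) = (M y)ᵀ by
        ext i j
        simp [hgdef, Matrix.transpose_apply, hM]]
      exact Matrix.det_transpose _
    rw [hfun] at hΦ
    -- log-density derivative
    have hlogfun : (fun y => Real.log (ω y)) = fun y => -Real.log ((M y).det) := by
      funext y
      rw [hω, Real.log_inv, Real.log_abs]
    have hlog : HasFDerivAt (fun y => Real.log (ω y)) (-(((M x).det)⁻¹ • G)) x := by
      rw [hlogfun]
      exact ((Real.hasDerivAt_log (hdet x)).comp_hasFDerivAt x hΦ).neg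
    have hfd : fderiv ℝ (fun y => Real.log (ω y)) x = -(((M x).det)⁻¹ • G) := hlog.fderiv
    -- applying G
    have hGapply : ∀ v, G v = ∑ b : Fin n,
        detCM n (Function.update v₀ b
          ((e : EuclideanSpace ℝ (Fin n) →L[ℝ] (Fin n → ℝ)) (L b v))) := by
      intro v
      rw [hGdef, ContinuousLinearMap.sum_apply]
      apply Finset.sum_congr rfl
      intro b _
      simp [ContinuousMultilinearMap.toContinuousLinearMap_apply, hv₀def]
    -- update formula via Cramer
    have hupdate : ∀ (b : Fin n) (w : Fin n → ℝ),
        detCM n (Function.update v₀ b w) = ((M x).adjugate *ᵥ w) b := by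
      intro b w
      rw [detCM_apply]
      rw [show Matrix.of (Function.update v₀ b w) = ((M x).updateCol b w)ᵀ by
        ext i j
        rw [Matrix.transpose_apply, Matrix.updateCol_apply]
        by_cases h : i = b
        · subst h; simp
        · simp [Function.update_of_ne h, hv₀def, hgdef, hM, h]]
      rw [Matrix.det_transpose, ← Matrix.cramer_apply, Matrix.cramer_eq_adjugate_mulVec]
    -- the matrix A represents L a
    have hAv : ∀ v : EuclideanSpace ℝ (Fin n),
        (e : EuclideanSpace ℝ (Fin n) →L[ℝ] (Fin n → ℝ)) (L a v) = A *ᵥ (fun j => v j) := by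
      intro v
      have hv : v = ∑ j : Fin n, v j • EuclideanSpace.single j (1:ℝ) := by
        have := (EuclideanSpace.basisFun (Fin n) ℝ).sum_repr v
        simpa using this.symm
      have hlin : L a v = ∑ j : Fin n, v j • L a (EuclideanSpace.single j (1:ℝ)) := by
        conv_lhs => rw [hv]
        rw [map_sum]
        simp
      funext i
      have : (e : EuclideanSpace ℝ (Fin n) →L[ℝ] (Fin n → ℝ)) (L a v) i = (L a v) i := rfl
      rw [this, hlin]
      have hsum : (∑ j : Fin n, v j • L a (EuclideanSpace.single j (1:ℝ))) i
          = ∑ j : Fin n, v j * (L a (EuclideanSpace.single j (1:ℝ))) i := by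
        rw [WithLp.ofLp_sum]
        rw [Finset.sum_apply]
        rfl
      rw [hsum, Matrix.mulVec, dotProduct]
      apply Finset.sum_congr rfl
      intro j _
      rw [hAdef]
      simp [mul_comm]
    -- the bracket relation on derivatives
    have hbr : ∀ b : Fin n,
        (e : EuclideanSpace ℝ (Fin n) →L[ℝ] (Fin n → ℝ)) (L b (X a x))
          = (A *ᵥ (fun j => X b x j)) + ∑ c : Fin n, C a b c • v₀ c := by
      intro b
      have h2 : L b (X a x) = L a (X b x) + ∑ c : Fin n, C a b c • X c x := by
        have h := hbracket a b x
        rw [hLdef]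
        calc fderiv ℝ (X b) x (X a x)
            = (fderiv ℝ (X b) x (X a x) - fderiv ℝ (X a) x (X b x))
              + fderiv ℝ (X a) x (X b x) := by abel
          _ = fderiv ℝ (X a) x (X b x) + ∑ c : Fin n, C a b c • X c x := by rw [h]; abel
      rw [h2, map_add, hAv (X b x)]
      congr 1
      rw [map_sum]
      apply Finset.sum_congr rfl
      intro c _
      rw [_root_.map_smul]
      rfl
    -- the diagonal replacement terms
    have hself : ∀ b c : Fin n, detCM n (Function.update v₀ b (v₀ c))
        = if c = b then (M x).det else 0 := by
      intro b c
      by_cases hc : c = b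
      · subst hc
        rw [Function.update_eq_self, if_pos rfl, detCM_apply]
        rw [show Matrix.of v₀ = (M x)ᵀ by
          ext i j
          simp [hv₀def, hgdef, Matrix.transpose_apply, hM]]
        exact Matrix.det_transpose _
      · rw [if_neg hc]
        have hz : (Matrix.detRowAlternating (R := ℝ) (n := Fin n))
            (Function.update v₀ b (v₀ c)) = 0 := by
          apply AlternatingMap.map_eq_zero_of_eq _ _
            (show Function.update v₀ b (v₀ c) b = Function.update v₀ b (v₀ c) c from ?_)
            (show b ≠ c from fun h => hc h.symm)
          rw [Function.update_self, Function.update_of_ne (fun h => hc h)]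
        exact hz
    -- linear split of each term
    have hsplit : ∀ b : Fin n,
        detCM n (Function.update v₀ b
          ((e : EuclideanSpace ℝ (Fin n) →L[ℝ] (Fin n → ℝ)) (L b (X a x))))
        = ((M x).adjugate *ᵥ (A *ᵥ (fun j => X b x j))) b + C a b b * (M x).det := by
      intro b
      rw [hbr b]
      have hT : ∀ w : Fin n → ℝ, ((detCM n).toContinuousLinearMap v₀ b) w
          = detCM n (Function.update v₀ b w) := by
        intro w
        simp [ContinuousMultilinearMap.toContinuousLinearMap_apply]
      rw [← hT, map_add, map_sum]
      rw [hT, hupdate]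
      congr 1
      rw [show (∑ c : Fin n, ((detCM n).toContinuousLinearMap v₀ b) (C a b c • v₀ c))
          = ∑ c : Fin n, C a b c * detCM n (Function.update v₀ b (v₀ c)) by
        apply Finset.sum_congr rfl
        intro c _
        rw [_root_.map_smul, hT]
        simp]
      rw [show (∑ c : Fin n, C a b c * detCM n (Function.update v₀ b (v₀ c)))
          = ∑ c : Fin n, C a b c * (if c = b then (M x).det else 0) by
        apply Finset.sum_congr rfl
        intro c _
        rw [hself]]
      simp
    -- trace computation
    have htrace : (∑ b : Fin n, ((M x).adjugate *ᵥ (A *ᵥ (fun j => X b x j))) b)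
        = (M x).det * ∑ b : Fin n, A b b := by
      have hcol : ∀ b : Fin n, (fun j => X b x j) = fun j => (M x) j b := by
        intro b; funext j; rw [hM]
      calc (∑ b : Fin n, ((M x).adjugate *ᵥ (A *ᵥ (fun j => X b x j))) b)
          = ∑ b : Fin n, (((M x).adjugate * A) * (M x)) b b := by
            apply Finset.sum_congr rfl
            intro b _
            rw [hcol b, Matrix.mulVec_mulVec]
            rw [Matrix.mul_apply, Matrix.mulVec, dotProduct]
        _ = Matrix.trace (((M x).adjugate * A) * (M x)) := rfl
        _ = Matrix.trace ((M x) * ((M x).adjugate * A)) := (Matrix.trace_mul_comm _ _).symm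
        _ = Matrix.trace (((M x) * (M x).adjugate) * A) := by rw [Matrix.mul_assoc]
        _ = Matrix.trace (((M x).det • (1 : Matrix (Fin n) (Fin n) ℝ)) * A) := by
            rw [Matrix.mul_adjugate]
        _ = (M x).det * ∑ b : Fin n, A b b := by
            rw [Matrix.smul_mul, Matrix.one_mul, Matrix.trace_smul]
            rfl
    -- put everything together
    have hGa : G (X a x) = (M x).det * ((∑ b : Fin n, A b b) + ∑ b : Fin n, C a b b) := by
      rw [hGapply (X a x)]
      rw [Finset.sum_congr rfl (fun b _ => hsplit b)]
      rw [Finset.sum_add_distrib, htrace, ← Finset.sum_mul]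
      ring
    have hfirst : (∑ b : Fin n, (fderiv ℝ (X a) x (EuclideanSpace.single b 1)) b)
        = ∑ b : Fin n, A b b := by
      apply Finset.sum_congr rfl
      intro b _
      rw [hAdef]
      rfl
    rw [hdivh, hfd, hfirst]
    have : (-(((M x).det)⁻¹ • G)) (X a x) = -(((M x).det)⁻¹ * G (X a x)) := by
      simp
    rw [this, hGa, inv_mul_cancel_left₀ (hdet x)]
    ring
  · rw [hV]
    positivity
  · rw [hV]
    constructor
    · intro h a
      have hsum : (∑ a : Fin n, (∑ b : Fin n, C a b b) ^ 2) = 0 := by linarith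
      have := (Finset.sum_eq_zero_iff_of_nonneg
        (fun a _ => sq_nonneg (∑ b : Fin n, C a b b))).1 hsum a (Finset.mem_univ a)
      exact pow_eq_zero_iff (two_ne_zero) |>.1 this
    · intro h
      simp [h]
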